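/- If Path(E) is infinite, the filter F_cf of cofinite subsets of Path(E) is a topological filter; consequently (G(E), τ_{F_cf}) is a topological inverse semigroup. -/

import Mathlib

universe u

/-- A directed graph. -/
structure DiGraph : Type (u + 1) where
  V : Type u
  E : Type u
  s : E → V
  r : E → V

namespace DiGraph

variable (G : DiGraph.{u})

/-- A list of edges forms a valid path starting at vertex `v`. -/
def Valid (v : G.V) : List G.E → Prop
  | [] => True
  | e :: l => G.s e = v ∧ Valid (G.r e) l

/-- the endpoint of a list of edges starting at `v`. -/
def dst (v : G.V) : List G.E → G.V
  | [] => v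
  | e :: l => dst (G.r e) l

variable {G}

lemma dst_append (v : G.V) (l₁ l₂ : List G.E) :
    G.dst v (l₁ ++ l₂) = G.dst (G.dst v l₁) l₂ := by
  induction l₁ generalizing v with
  | nil => rfl
  | cons e t ih => simp [dst, ih]

lemma valid_append (v : G.V) (l₁ l₂ : List G.E) :
    G.Valid v (l₁ ++ l₂) ↔ G.Valid v l₁ ∧ G.Valid (G.dst v l₁) l₂ := by
  induction l₁ generalizing v with
  | nil => simp [Valid, dst]
  | cons e t ih => simp [Valid, dst, ih, and_assoc]

variable (G) in
/-- A (finite, directed) path in `G`: a source vertex together with a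
composable list of edges.  Paths of length zero are the vertices. -/
structure GPath : Type u where
  src : G.V
  edges : List G.E
  valid : G.Valid src edges

/-- The range (end vertex) of a path. -/
def GPath.rng (p : G.GPath) : G.V := G.dst p.src p.edges

/-- Concatenation of composable paths. -/
def GPath.comp (p q : G.GPath) (h : p.rng = q.src) : G.GPath :=
  ⟨p.src, p.edges ++ q.edges, by
    rw [valid_append]
    exact ⟨p.valid, by rw [show G.dst p.src p.edges = q.src from h]; exact q.valid⟩⟩

lemma GPath.comp_rng (p q : G.GPath) (h : p.rng = q.src) : (p.comp q h).rng = q.rng := by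
  show G.dst p.src (p.edges ++ q.edges) = _
  rw [dst_append, show G.dst p.src p.edges = q.src from h]; rfl

/-- If `p` is a prefix of the path `q`, the remaining path (so that
`q = p.comp (p.strip q _ _)`). -/
def GPath.strip (p q : G.GPath) (hs : p.src = q.src) (hp : p.edges <+: q.edges) : G.GPath :=
  ⟨p.rng, q.edges.drop p.edges.length, by
    obtain ⟨t, ht⟩ := hp
    have h1 : p.edges ++ q.edges.drop p.edges.length = q.edges := by
      rw [← ht, List.drop_left]
    have h2 : G.Valid p.src (p.edges ++ q.edges.drop p.edges.length) := by
      rw [h1, hs]; exact q.valid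
    exact ((valid_append _ _ _).mp h2).2⟩

lemma GPath.strip_rng (p q : G.GPath) (hs : p.src = q.src) (hp : p.edges <+: q.edges) :
    (p.strip q hs hp).rng = q.rng := by
  show G.dst p.rng (q.edges.drop p.edges.length) = G.dst q.src q.edges
  obtain ⟨t, ht⟩ := hp
  have h1 : p.edges ++ q.edges.drop p.edges.length = q.edges := by
    rw [← ht, List.drop_left]
  conv_rhs => rw [← hs, ← h1]
  rw [dst_append]; rfl

variable (G) in
/-- A nonzero element `a b⁻¹` of the graph inverse semigroup: a pair of
paths with the same range. -/
structure NZ : Type u where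
  a : G.GPath
  b : G.GPath
  h : a.rng = b.rng

/-- The graph inverse semigroup `G(E)` over a directed graph, in normal form:
the elements `a b⁻¹` with `r(a) = r(b)`, together with a zero element. -/
def GIS (G : DiGraph.{u}) : Type u := Option (NZ G)

instance : Zero (GIS G) := ⟨none⟩

open scoped Classical in
/-- The multiplication of the graph inverse semigroup:
`a b⁻¹ · c d⁻¹ = a c₁ d⁻¹` if `c = b c₁`, `a (d b₁)⁻¹` if `b = c b₁`, and `0` otherwise. -/
noncomputable instance : Mul (GIS G) :=
  ⟨fun x y =>
    match x, y with
    | none, _ => none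
    | some _, none => none
    | some ⟨a, b, hab⟩, some ⟨c, d, hcd⟩ =>
      if h : b.src = c.src ∧ b.edges <+: c.edges then
        some ⟨a.comp (b.strip c h.1 h.2) hab, d, by
          exact (GPath.comp_rng _ _ _).trans ((GPath.strip_rng _ _ _ _).trans hcd)⟩
      else if h' : c.src = b.src ∧ c.edges <+: b.edges then
        some ⟨a, d.comp (c.strip b h'.1 h'.2) hcd.symm, by
          exact hab.trans ((GPath.comp_rng _ _ _).trans (GPath.strip_rng _ _ _ _)).symm⟩
      else none⟩

/-- The nonzero element `a b⁻¹` of `G(E)` determined by a pair of paths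
with the same range. -/
def GIS.nz (n : NZ G) : GIS G := some n

/-- The inversion of the graph inverse semigroup: `(u v⁻¹)⁻¹ = v u⁻¹`. -/
def GIS.inv : GIS G → GIS G
  | none => none
  | some ⟨a, b, h⟩ => some ⟨b, a, h.symm⟩

end DiGraph
namespace DiGraph

variable {G : DiGraph.{u}}

/-- membership predicate for the basic neighbourhoods of zero: all of
`a b⁻¹` with `a, b ∈ F`, together with `0`. -/
def inUF (F : Set G.GPath) : GIS G → Prop
  | none => True
  | some n => n.a ∈ F ∧ n.b ∈ F

/-- The basic neighbourhood `U_F(0) = {a b⁻¹ : a, b ∈ F} ∪ {0}` of zero. -/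
def UF (F : Set G.GPath) : Set (GIS G) := {x | inUF F x}

lemma inUF_mono {F₁ F₂ : Set G.GPath} (h : F₁ ⊆ F₂) :
    ∀ x : GIS G, inUF F₁ x → inUF F₂ x := by
  intro x hx
  cases x with
  | none => trivial
  | some n => exact ⟨h hx.1, h hx.2⟩

/-- The topology `τ_𝓕` on `G(E)` determined by a filter `𝓕` on `Path(E)`:
every nonzero element is isolated, and the sets `U_F(0)`, `F ∈ 𝓕`, form a
neighbourhood base at `0`. -/
def tauF (𝓕 : Filter G.GPath) : TopologicalSpace (GIS G) where
  IsOpen U := (0 : GIS G) ∈ U → ∃ F ∈ 𝓕, UF F ⊆ U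
  isOpen_univ := fun _ => ⟨Set.univ, Filter.univ_mem, Set.subset_univ _⟩
  isOpen_inter := fun U V hU hV h0 => by
    obtain ⟨F₁, hF₁, hs₁⟩ := hU h0.1
    obtain ⟨F₂, hF₂, hs₂⟩ := hV h0.2
    exact ⟨F₁ ∩ F₂, Filter.inter_mem hF₁ hF₂, fun x hx =>
      ⟨hs₁ (inUF_mono Set.inter_subset_left x hx),
       hs₂ (inUF_mono Set.inter_subset_right x hx)⟩⟩
  isOpen_sUnion := fun S hS h0 => by
    obtain ⟨U, hU, h0U⟩ := h0
    obtain ⟨F, hF, hs⟩ := hS U hU h0U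
    exact ⟨F, hF, hs.trans (Set.subset_sUnion_of_mem hU)⟩

/-- The prefix partial order on paths: `a ≤ b` iff `b` is a prefix of `a`. -/
def prefLE (a b : G.GPath) : Prop := b.src = a.src ∧ b.edges <+: a.edges

/-- An ideal of `(Path(E), ≤)`: a set `A` with `↓A = A`. -/
def IsIdeal (A : Set G.GPath) : Prop :=
  ∀ a b : G.GPath, prefLE a b → b ∈ A → a ∈ A

/-- A topological filter on `Path(E)`:
(i) for `F ∈ 𝓕` and paths `a, b` with `r(a) = r(b)`, the set
`F \ {bk : k ∈ Path(E), ak ∉ F}` belongs to `𝓕`;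
(ii) `𝓕` contains all cofinite subsets of `Path(E)`;
(iii) `𝓕` has a base consisting of ideals of `(Path(E), ≤)`. -/
def IsTopFilter (𝓕 : Filter G.GPath) : Prop :=
  (∀ F ∈ 𝓕, ∀ a b : G.GPath, a.rng = b.rng →
      F \ {p | ∃ (k : G.GPath) (h1 : b.rng = k.src) (h2 : a.rng = k.src),
        p = b.comp k h1 ∧ a.comp k h2 ∉ F} ∈ 𝓕) ∧
  𝓕 ≤ Filter.cofinite ∧
  (∀ F ∈ 𝓕, ∃ I ∈ 𝓕, I ⊆ F ∧ IsIdeal I)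

variable (G) in
/-- The filter `𝓕_ω` generated by the sets `U_n = {u ∈ Path(E) : |u| > n}`. -/
def Fomega : Filter G.GPath :=
  Filter.generate {S | ∃ n : ℕ, S = {u : G.GPath | n < u.edges.length}}

variable (G) in
/-- `U_n(0) = {u v⁻¹ : min{|u|,|v|} > n} ∪ {0}`. -/
def Un (n : ℕ) : Set (GIS G) := UF {u : G.GPath | n < u.edges.length}

end DiGraph


namespace DiGraph

variable {G : DiGraph.{u}}

theorem GPath.ext' : ∀ {p q : G.GPath}, p.src = q.src → p.edges = q.edges → p = q
  | ⟨_, _, _⟩, ⟨_, _, _⟩, rfl, rfl => rfl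

lemma finite_of_emb {S : Set G.GPath} (T : Set (G.V × List G.E)) (hT : T.Finite)
    (h : ∀ p ∈ S, (p.src, p.edges) ∈ T) : S.Finite := by
  have hinj : Set.InjOn (fun q : G.GPath => (q.src, q.edges))
      ((fun q : G.GPath => (q.src, q.edges)) ⁻¹' T) := fun p _ q _ hpq =>
    GPath.ext' (congrArg Prod.fst hpq) (congrArg Prod.snd hpq)
  exact (hT.preimage hinj).subset h

lemma finite_prefixes (c : G.GPath) :
    {x : G.GPath | x.src = c.src ∧ x.edges <+: c.edges}.Finite := by
  apply finite_of_emb ((fun n => (c.src, c.edges.take n)) '' Set.Iic c.edges.length)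
    ((Set.finite_Iic _).image _)
  rintro p ⟨h1, h2⟩
  refine ⟨p.edges.length, h2.length_le, ?_⟩
  show (c.src, c.edges.take p.edges.length) = (p.src, p.edges)
  rw [← List.prefix_iff_eq_take.mp h2, h1]

lemma finite_removed {F : Set G.GPath} (hF : Fᶜ.Finite) (a b : G.GPath) :
    {p : G.GPath | ∃ (k : G.GPath) (h1 : b.rng = k.src) (h2 : a.rng = k.src),
      p = b.comp k h1 ∧ a.comp k h2 ∉ F}.Finite := by
  apply finite_of_emb
    ((fun q : G.GPath => (b.src, b.edges ++ q.edges.drop a.edges.length)) '' Fᶜ) (hF.image _)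
  rintro p ⟨k, h1, h2, rfl, hk⟩
  refine ⟨a.comp k h2, hk, ?_⟩
  show (b.src, b.edges ++ (a.edges ++ k.edges).drop a.edges.length) = _
  rw [List.drop_left]
  rfl

lemma finite_bad {F : Set G.GPath} (hF : Fᶜ.Finite) (c d : G.GPath) :
    {b : G.GPath | ∃ (h1 : c.src = b.src) (h2 : c.edges <+: b.edges)
      (h3 : d.rng = (c.strip b h1 h2).src), d.comp (c.strip b h1 h2) h3 ∉ F}.Finite := by
  apply finite_of_emb
    ((fun q : G.GPath => (c.src, c.edges ++ q.edges.drop d.edges.length)) '' Fᶜ) (hF.image _)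
  rintro p ⟨h1, h2, h3, hp⟩
  refine ⟨d.comp (c.strip p h1 h2) h3, hp, ?_⟩
  show (c.src, c.edges ++ (d.edges ++ p.edges.drop c.edges.length).drop d.edges.length) = _
  rw [List.drop_left]
  obtain ⟨t, ht⟩ := id h2
  have he : c.edges ++ p.edges.drop c.edges.length = p.edges := by
    conv_lhs => rw [← ht, List.drop_left]
    exact ht
  rw [← h1, he]

lemma IsIdeal.comp_mem {I : Set G.GPath} (hI : IsIdeal I) {p : G.GPath} (hp : p ∈ I)
    (q : G.GPath) (h : p.rng = q.src) : p.comp q h ∈ I :=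
  hI _ p ⟨rfl, List.prefix_append _ _⟩ hp

lemma exists_cofinite_ideal {F : Set G.GPath} (hF : F ∈ (Filter.cofinite : Filter G.GPath)) :
    ∃ I ∈ (Filter.cofinite : Filter G.GPath), I ⊆ F ∧ IsIdeal I := by
  refine ⟨{a | ∀ c, prefLE c a → c ∈ F}, ?_, fun a ha => ha a ⟨rfl, List.prefix_rfl⟩, ?_⟩
  · rw [Filter.mem_cofinite] at hF ⊢
    refine Set.Finite.subset (Set.Finite.biUnion hF fun c _ => finite_prefixes c) ?_
    intro a ha
    simp only [Set.mem_compl_iff, Set.mem_setOf_eq, not_forall] at ha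
    obtain ⟨c, hc, hcF⟩ := ha
    exact Set.mem_biUnion hcF ⟨hc.1, hc.2⟩
  · intro x y hxy hy c hcx
    exact hy c ⟨hxy.1.trans hcx.1, hxy.2.trans hcx.2⟩

lemma zero_mul' (x : GIS G) : (0 : GIS G) * x = 0 := rfl

lemma mul_zero' (x : GIS G) : x * (0 : GIS G) = 0 := by cases x <;> rfl

open scoped Classical in
lemma mul_some_some (a b : G.GPath) (hab : a.rng = b.rng) (c d : G.GPath) (hcd : c.rng = d.rng) :
    GIS.nz ⟨a, b, hab⟩ * GIS.nz ⟨c, d, hcd⟩ =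
      if h : b.src = c.src ∧ b.edges <+: c.edges then
        GIS.nz ⟨a.comp (b.strip c h.1 h.2) hab, d, by
          exact (GPath.comp_rng _ _ _).trans ((GPath.strip_rng _ _ _ _).trans hcd)⟩
      else if h' : c.src = b.src ∧ c.edges <+: b.edges then
        GIS.nz ⟨a, d.comp (c.strip b h'.1 h'.2) hcd.symm, by
          exact hab.trans ((GPath.comp_rng _ _ _).trans (GPath.strip_rng _ _ _ _)).symm⟩
      else (0 : GIS G) := rfl

lemma isOpen_tauF_iff {𝓕 : Filter G.GPath} {U : Set (GIS G)} :
    @IsOpen _ (tauF 𝓕) U ↔ ((0 : GIS G) ∈ U → ∃ F ∈ 𝓕, UF F ⊆ U) := Iff.rfl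

lemma isOpen_singleton_nz {𝓕 : Filter G.GPath} (n : NZ G) :
    @IsOpen _ (tauF 𝓕) {GIS.nz n} := fun h0 => Option.some_ne_none n (show (none : Option (NZ G)) = some n from h0).symm |>.elim

lemma isOpen_UF {𝓕 : Filter G.GPath} {F : Set G.GPath} (hF : F ∈ 𝓕) :
    @IsOpen _ (tauF 𝓕) (UF F) := fun _ => ⟨F, hF, subset_rfl⟩

lemma zero_mem_UF (F : Set G.GPath) : (0 : GIS G) ∈ UF F := trivial

end DiGraph

open DiGraph in
/-- If `Path(E)` is infinite, the filter `𝓕_cf` of cofinite subsets of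
`Path(E)` is a topological filter; consequently `(G(E), τ_{𝓕_cf})` is a
(Hausdorff) topological inverse semigroup. -/
theorem cofinite_topological (G : DiGraph.{u}) [Infinite G.GPath] :
    IsTopFilter (Filter.cofinite : Filter G.GPath) ∧
    @T2Space (GIS G) (tauF (Filter.cofinite : Filter G.GPath)) ∧
    @Continuous (GIS G × GIS G) (GIS G)
      (@instTopologicalSpaceProd _ _ (tauF (Filter.cofinite : Filter G.GPath))
        (tauF (Filter.cofinite : Filter G.GPath)))
      (tauF (Filter.cofinite : Filter G.GPath)) (fun p => p.1 * p.2) ∧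
    @Continuous (GIS G) (GIS G) (tauF (Filter.cofinite : Filter G.GPath))
      (tauF (Filter.cofinite : Filter G.GPath)) GIS.inv := by
  classical
  letI : TopologicalSpace (GIS G) := tauF (Filter.cofinite : Filter G.GPath)
  refine ⟨⟨?_, le_refl _, fun F hF => exists_cofinite_ideal hF⟩, ?_, ?_, ?_⟩
  · -- condition (i)
    intro F hF a b hab
    rw [Filter.mem_cofinite] at hF ⊢
    refine Set.Finite.subset (hF.union (finite_removed hF a b)) ?_
    intro p hp
    rw [Set.mem_compl_iff, Set.mem_diff, not_and, not_not] at hp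
    by_cases hpF : p ∈ F
    · exact Or.inr (hp hpF)
    · exact Or.inl hpF
  · -- T2
    refine ⟨fun x y hxy => ?_⟩
    cases x with
    | none =>
      cases y with
      | none => exact absurd rfl hxy
      | some m =>
        refine ⟨UF {m.a}ᶜ, {GIS.nz m}, isOpen_UF ?_, isOpen_singleton_nz m, trivial, rfl, ?_⟩
        · rw [Filter.mem_cofinite, compl_compl]
          exact Set.finite_singleton _
        · rw [Set.disjoint_left]
          rintro z hz rfl
          exact hz.1 rfl
    | some n =>
      cases y with
      | none =>
        refine ⟨{GIS.nz n}, UF {n.a}ᶜ, isOpen_singleton_nz n, isOpen_UF ?_, rfl, trivial, ?_⟩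
        · rw [Filter.mem_cofinite, compl_compl]
          exact Set.finite_singleton _
        · rw [Set.disjoint_right]
          rintro z hz rfl
          exact hz.1 rfl
      | some m =>
        exact ⟨{GIS.nz n}, {GIS.nz m}, isOpen_singleton_nz n, isOpen_singleton_nz m, rfl, rfl,
          Set.disjoint_singleton.mpr hxy⟩
  · -- multiplication continuous
    rw [continuous_def]
    intro U hU
    rw [isOpen_prod_iff]
    intro x y hxy
    cases x with
    | none =>
      have h0 : (0 : GIS G) ∈ U := hxy
      obtain ⟨F, hF, hFU⟩ := isOpen_tauF_iff.mp hU h0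
      obtain ⟨I, hI, hIF, hid⟩ := exists_cofinite_ideal hF
      cases y with
      | none =>
        refine ⟨UF I, UF I, isOpen_UF hI, isOpen_UF hI, trivial, trivial, ?_⟩
        rintro ⟨x', y'⟩ ⟨hx', hy'⟩
        show x' * y' ∈ U
        apply hFU
        apply inUF_mono hIF
        cases x' with
        | none => trivial
        | some n' =>
          cases y' with
          | none => trivial
          | some m' =>
            obtain ⟨a, b, hab⟩ := n'
            obtain ⟨c, d, hcd⟩ := m'
            obtain ⟨ha, hb⟩ := hx'
            obtain ⟨hc, hd⟩ := hy'
            show inUF I (GIS.nz ⟨a, b, hab⟩ * GIS.nz ⟨c, d, hcd⟩)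
            rw [mul_some_some]
            split_ifs with h h'
            · exact ⟨hid.comp_mem ha _ hab, hd⟩
            · exact ⟨ha, hid.comp_mem hd _ hcd.symm⟩
            · trivial
      | some m =>
        obtain ⟨c, d, hcd⟩ := m
        set Bad : Set G.GPath := {x | x.src = c.src ∧ x.edges <+: c.edges} ∪
          {p : G.GPath | ∃ (h1 : c.src = p.src) (h2 : c.edges <+: p.edges)
            (h3 : d.rng = (c.strip p h1 h2).src), d.comp (c.strip p h1 h2) h3 ∉ I} with hBaddef
        have hBad : Bad.Finite :=
          (finite_prefixes c).union (finite_bad (Filter.mem_cofinite.mp hI) c d)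
        have hF' : I \ Bad ∈ (Filter.cofinite : Filter G.GPath) := by
          rw [Filter.mem_cofinite]
          refine Set.Finite.subset ((Filter.mem_cofinite.mp hI).union hBad) ?_
          intro p hp
          rw [Set.mem_compl_iff, Set.mem_diff, not_and, not_not] at hp
          by_cases hpI : p ∈ I
          · exact Or.inr (hp hpI)
          · exact Or.inl hpI
        refine ⟨UF (I \ Bad), {GIS.nz ⟨c, d, hcd⟩}, isOpen_UF hF', isOpen_singleton_nz _,
          trivial, rfl, ?_⟩
        rintro ⟨x', y'⟩ ⟨hx', rfl⟩
        show x' * GIS.nz ⟨c, d, hcd⟩ ∈ U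
        cases x' with
        | none => exact h0
        | some n' =>
          obtain ⟨a, b, hab⟩ := n'
          obtain ⟨ha, hb⟩ := hx'
          apply hFU
          apply inUF_mono hIF
          show inUF I (GIS.nz ⟨a, b, hab⟩ * GIS.nz ⟨c, d, hcd⟩)
          rw [mul_some_some]
          split_ifs with h h'
          · exact (hb.2 (Or.inl ⟨h.1, h.2⟩)).elim
          · refine ⟨ha.1, ?_⟩
            by_contra hcon
            exact hb.2 (Or.inr ⟨h'.1, h'.2, hcd.symm, hcon⟩)
          · trivial
    | some n =>
      cases y with
      | some m =>
        refine ⟨{GIS.nz n}, {GIS.nz m}, isOpen_singleton_nz n, isOpen_singleton_nz m, rfl, rfl, ?_⟩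
        rintro ⟨x', y'⟩ ⟨rfl, rfl⟩
        exact hxy
      | none =>
        obtain ⟨a, b, hab⟩ := n
        have h0 : (0 : GIS G) ∈ U := hxy
        obtain ⟨F, hF, hFU⟩ := isOpen_tauF_iff.mp hU h0
        obtain ⟨I, hI, hIF, hid⟩ := exists_cofinite_ideal hF
        set Bad : Set G.GPath := {x | x.src = b.src ∧ x.edges <+: b.edges} ∪
          {p : G.GPath | ∃ (h1 : b.src = p.src) (h2 : b.edges <+: p.edges)
            (h3 : a.rng = (b.strip p h1 h2).src), a.comp (b.strip p h1 h2) h3 ∉ I} with hBaddef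
        have hBad : Bad.Finite :=
          (finite_prefixes b).union (finite_bad (Filter.mem_cofinite.mp hI) b a)
        have hF' : I \ Bad ∈ (Filter.cofinite : Filter G.GPath) := by
          rw [Filter.mem_cofinite]
          refine Set.Finite.subset ((Filter.mem_cofinite.mp hI).union hBad) ?_
          intro p hp
          rw [Set.mem_compl_iff, Set.mem_diff, not_and, not_not] at hp
          by_cases hpI : p ∈ I
          · exact Or.inr (hp hpI)
          · exact Or.inl hpI
        refine ⟨{GIS.nz ⟨a, b, hab⟩}, UF (I \ Bad), isOpen_singleton_nz _, isOpen_UF hF',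
          rfl, trivial, ?_⟩
        rintro ⟨x', y'⟩ ⟨rfl, hy'⟩
        show GIS.nz ⟨a, b, hab⟩ * y' ∈ U
        cases y' with
        | none => exact h0
        | some m' =>
          obtain ⟨c, d, hcd⟩ := m'
          obtain ⟨hc, hd⟩ := hy'
          apply hFU
          apply inUF_mono hIF
          show inUF I (GIS.nz ⟨a, b, hab⟩ * GIS.nz ⟨c, d, hcd⟩)
          rw [mul_some_some]
          split_ifs with h h'
          · refine ⟨?_, hd.1⟩
            by_contra hcon
            exact hc.2 (Or.inr ⟨h.1, h.2, hab, hcon⟩)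
          · exact (hc.2 (Or.inl ⟨h'.1, h'.2⟩)).elim
          · trivial
  · -- inversion continuous
    rw [continuous_def]
    intro U hU
    rw [isOpen_tauF_iff]
    intro h0
    obtain ⟨F, hF, hFU⟩ := isOpen_tauF_iff.mp hU h0
    refine ⟨F, hF, ?_⟩
    intro z hz
    show GIS.inv z ∈ U
    apply hFU
    cases z with
    | none => trivial
    | some n =>
      obtain ⟨a, b, h⟩ := n
      exact ⟨hz.2, hz.1⟩
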